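/- Let L be a linear operator (matrix) on a finite-dimensional space decomposed into blocks L_pp, L_pc, L_cp, L_cc with respect to an orthogonal direct sum V = P ⊕ C. If L_pc ∘ L_cc^j ∘ L_cp = 0 for all j < n, then the P-row of L^n has blocks (L^n)_pp = L_pp^n and (L^n)_pc = ∑_{j=1}^{n} L_pp^{j-1} ∘ L_pc ∘ L_cc^{n-j}. -/
import Mathlib

private lemma structure_lemma_row_aux {A : Type*} [Ring A] (L Δ B P Q S R : A)
    (hΔ : Δ * Δ = Δ) (hBdef : B = 1 - Δ) (hP : P = Δ * L * Δ) (hQ : Q = Δ * L * B)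
    (hS : S = B * L * B) (hR : R = B * L * Δ) (n : ℕ)
    (h : ∀ j < n, Q * S ^ j * R = 0) :
    Δ * L ^ n * Δ = Δ * P ^ n * Δ ∧
    Δ * L ^ n * B = ∑ j ∈ Finset.Icc 1 n, P ^ (j - 1) * Q * S ^ (n - j) := by
  have hB : B * B = B := by
    rw [hBdef]; simp only [sub_mul, mul_sub, one_mul, mul_one, hΔ]; abel
  have hAB : Δ * B = 0 := by rw [hBdef, mul_sub, mul_one, hΔ, sub_self]
  have hApB : Δ + B = 1 := by rw [hBdef]; abel
  have hAP : Δ * P = P := by rw [hP, ← mul_assoc, ← mul_assoc, hΔ]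
  have hPA : P * Δ = P := by rw [hP, mul_assoc, hΔ]
  have hAQ : Δ * Q = Q := by rw [hQ, ← mul_assoc, ← mul_assoc, hΔ]
  have hPmA : ∀ m, Δ * P ^ m * Δ = Δ * P ^ m := by
    intro m
    cases m with
    | zero => simp [hΔ]
    | succ m =>
      rw [pow_succ]
      calc Δ * (P ^ m * P) * Δ = Δ * P ^ m * (P * Δ) := by noncomm_ring
        _ = Δ * P ^ m * P := by rw [hPA]
        _ = Δ * (P ^ m * P) := by noncomm_ring
  have hAPQ : ∀ m, Δ * P ^ m * Q = P ^ m * Q := by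
    intro m
    cases m with
    | zero => simpa using hAQ
    | succ m =>
      rw [pow_succ']
      calc Δ * (P * P ^ m) * Q = (Δ * P) * (P ^ m * Q) := by noncomm_ring
        _ = P * (P ^ m * Q) := by rw [hAP]
        _ = P * P ^ m * Q := by noncomm_ring
  revert h
  induction n with
  | zero =>
    intro _
    refine ⟨by simp, ?_⟩
    simp [hAB]
  | succ n ih =>
    intro h
    obtain ⟨ih1, ih2⟩ := ih (fun j hj => h j (hj.trans n.lt_succ_self))
    have split : ∀ X : A,
        Δ * L ^ (n + 1) * X = Δ * L ^ n * Δ * (Δ * L * X) + Δ * L ^ n * B * (B * L * X) := by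
      intro X
      have e1 : Δ * L ^ n * Δ * (Δ * L * X) + Δ * L ^ n * B * (B * L * X)
          = Δ * L ^ n * ((Δ * Δ) * L * X) + Δ * L ^ n * ((B * B) * L * X) := by
        noncomm_ring
      rw [e1, hΔ, hB]
      have e2 : Δ * L ^ n * (Δ * L * X) + Δ * L ^ n * (B * L * X)
          = Δ * L ^ n * ((Δ + B) * (L * X)) := by noncomm_ring
      rw [e2, hApB, pow_succ]
      noncomm_ring
    have hz : (∑ j ∈ Finset.Icc 1 n, P ^ (j - 1) * Q * S ^ (n - j)) * (B * L * Δ) = 0 := by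
      rw [Finset.sum_mul]
      refine Finset.sum_eq_zero fun j hj => ?_
      have h0 : Q * S ^ (n - j) * R = 0 := h (n - j) (by omega)
      calc P ^ (j - 1) * Q * S ^ (n - j) * (B * L * Δ)
          = P ^ (j - 1) * (Q * S ^ (n - j) * R) := by rw [hR]; noncomm_ring
        _ = 0 := by rw [h0, mul_zero]
    constructor
    · rw [split Δ, ih1, ih2, hz, add_zero, ← hP, hPmA n, hPmA (n + 1), pow_succ, ← mul_assoc]
    · rw [split B, ih1, ih2, ← hQ, ← hS, hPmA n, hAPQ n, Finset.sum_mul]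
      have hcong : ∀ j ∈ Finset.Icc 1 n,
          P ^ (j - 1) * Q * S ^ (n - j) * S = P ^ (j - 1) * Q * S ^ (n + 1 - j) := by
        intro j hj
        have hjn : j ≤ n := (Finset.mem_Icc.mp hj).2
        rw [show n + 1 - j = (n - j) + 1 from by omega, pow_succ, mul_assoc]
      rw [Finset.sum_congr rfl hcong,
        Finset.sum_Icc_succ_top (by omega : 1 ≤ n + 1)]
      simp [Nat.sub_self]
      abel

/-- If `L_pc ∘ L_cc^j ∘ L_cp = 0` for all `j < n`, then the P-row of `L^n`
has blocks `(L^n)_pp = L_pp^n` and `(L^n)_pc = ∑_{j=1}^n L_pp^{j-1} L_pc L_cc^{n-j}`. -/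
theorem structure_lemma_row (V : Type*) [AddCommGroup V] [Module ℂ V] [FiniteDimensional ℂ V]
    (L Δ : Module.End ℂ V) (hΔ : Δ * Δ = Δ) (n : ℕ)
    (h : ∀ j < n, (Δ * L * (1 - Δ)) * ((1 - Δ) * L * (1 - Δ)) ^ j * ((1 - Δ) * L * Δ) = 0) :
    Δ * L ^ n * Δ = Δ * (Δ * L * Δ) ^ n * Δ ∧
    Δ * L ^ n * (1 - Δ) =
      ∑ j ∈ Finset.Icc 1 n,
        (Δ * L * Δ) ^ (j - 1) * (Δ * L * (1 - Δ)) * ((1 - Δ) * L * (1 - Δ)) ^ (n - j) := by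
  exact structure_lemma_row_aux L Δ (1 - Δ) (Δ * L * Δ) (Δ * L * (1 - Δ))
    ((1 - Δ) * L * (1 - Δ)) ((1 - Δ) * L * Δ) hΔ rfl rfl rfl rfl rfl n h
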